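/- Let Λ be a k-graph. Then the topological realization X_Λ is a k-dimensional CW-complex whose r-skeleton is X_Λ^r for each r ≤ k; the open cells are the sets Q_λ for λ ∈ Λ with d(λ) ≤ 1_k, an open cell Q_λ having dimension |d(λ)|, and the closed cells are the closures of the Q_λ. -/

import Mathlib

/-- A `k`-graph: a countable small category (objects identified with the
identity morphisms, i.e. the morphisms of degree `0`) equipped with a degree
functor `d : Λ → ℕᵏ` satisfying the unique factorization property. -/
structure KGraph (k : ℕ) where
  /-- The morphisms of the category. -/
  Mor : Type
  /-- The category is countable. -/
  countable : Countable Mor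
  /-- The source (domain) of a morphism, viewed as a degree-zero morphism. -/
  src : Mor → Mor
  /-- The range (codomain) of a morphism, viewed as a degree-zero morphism. -/
  rng : Mor → Mor
  /-- Composition `comp a b = a ∘ b`, meaningful when `src a = rng b`. -/
  comp : Mor → Mor → Mor
  /-- The degree functor. -/
  deg : Mor → Fin k → ℕ
  src_src : ∀ a, src (src a) = src a
  rng_src : ∀ a, rng (src a) = src a
  src_rng : ∀ a, src (rng a) = rng a
  rng_rng : ∀ a, rng (rng a) = rng a
  deg_src : ∀ a, deg (src a) = 0
  deg_rng : ∀ a, deg (rng a) = 0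
  src_comp : ∀ a b, src a = rng b → src (comp a b) = src b
  rng_comp : ∀ a b, src a = rng b → rng (comp a b) = rng a
  comp_assoc : ∀ a b c, src a = rng b → src b = rng c →
    comp (comp a b) c = comp a (comp b c)
  id_comp : ∀ a, comp (rng a) a = a
  comp_id : ∀ a, comp a (src a) = a
  deg_comp : ∀ a b, src a = rng b → deg (comp a b) = deg a + deg b
  /-- The unique factorization property. -/
  factor : ∀ (a : Mor) (m n : Fin k → ℕ), deg a = m + n →
    ∃! p : Mor × Mor, deg p.1 = m ∧ deg p.2 = n ∧ src p.1 = rng p.2 ∧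
      comp p.1 p.2 = a

namespace KGraph

variable {k : ℕ} (Λ : KGraph k)

/-- The segment `a(m,n)` of a morphism `a`, i.e. the (unique) middle factor of
`a = a(0,m) a(m,n) a(n, d(a))`; junk value `a` if no such factorization exists. -/
noncomputable def seg (a : Λ.Mor) (m n : Fin k → ℕ) : Λ.Mor :=
  letI := Classical.propDecidable
  if h : ∃ b : Λ.Mor, Λ.deg b = n - m ∧ ∃ x y : Λ.Mor,
      Λ.deg x = m ∧ Λ.src x = Λ.rng b ∧ Λ.src b = Λ.rng y ∧
      a = Λ.comp x (Λ.comp b y)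
  then h.choose else a

/-- The points `⨆_{λ ∈ Λ} {λ} × [0, d(λ)]` of which the topological
realization is a quotient; topologized as a disjoint union of subspaces of `ℝᵏ`. -/
def Points : Type :=
  Σ a : Λ.Mor, { t : Fin k → ℝ // ∀ i, 0 ≤ t i ∧ t i ≤ (Λ.deg a i : ℝ) }

instance : TopologicalSpace Λ.Points :=
  inferInstanceAs (TopologicalSpace
    (Σ a : Λ.Mor, { t : Fin k → ℝ // ∀ i, 0 ≤ t i ∧ t i ≤ (Λ.deg a i : ℝ) }))

/-- Coordinatewise floor `⌊t⌋` (as a vector of naturals; this is the honest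
floor on the relevant region `t ≥ 0`). -/
noncomputable def fl (t : Fin k → ℝ) : Fin k → ℕ := fun i => (⌊t i⌋).toNat

/-- Coordinatewise ceiling `⌈t⌉`. -/
noncomputable def ce (t : Fin k → ℝ) : Fin k → ℕ := fun i => (⌈t i⌉).toNat

/-- The fractional part `t - ⌊t⌋`. -/
noncomputable def frac (t : Fin k → ℝ) : Fin k → ℝ := fun i => t i - ((⌊t i⌋).toNat : ℝ)

/-- The relation `(μ,s) ∼ (ν,t) ⟺ μ(⌊s⌋,⌈s⌉) = ν(⌊t⌋,⌈t⌉)` and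
`s - ⌊s⌋ = t - ⌊t⌋` defining the topological realization. -/
def ptRel : Λ.Points → Λ.Points → Prop := fun p q =>
  Λ.seg p.1 (fl p.2.1) (ce p.2.1) = Λ.seg q.1 (fl q.2.1) (ce q.2.1) ∧
    frac p.2.1 = frac q.2.1

/-- `ptRel` is an equivalence relation. -/
def ptSetoid : Setoid Λ.Points where
  r := Λ.ptRel
  iseqv := ⟨fun _ => ⟨rfl, rfl⟩, fun h => ⟨h.1.symm, h.2.symm⟩,
    fun h h' => ⟨h.1.trans h'.1, h.2.trans h'.2⟩⟩

/-- The topological realization `X_Λ` of the `k`-graph `Λ`. -/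
def Real : Type := Quotient Λ.ptSetoid

instance : TopologicalSpace Λ.Real :=
  inferInstanceAs (TopologicalSpace (Quotient Λ.ptSetoid))

/-- The class `[λ, t] ∈ X_Λ` of a pair `(λ, t)` with `0 ≤ t ≤ d(λ)`. -/
def pt (a : Λ.Mor) (t : Fin k → ℝ) (h : ∀ i, 0 ≤ t i ∧ t i ≤ (Λ.deg a i : ℝ)) :
    Λ.Real :=
  Quotient.mk Λ.ptSetoid ⟨a, ⟨t, h⟩⟩

/-- The open cube `Q_λ = {[λ,t] : t ∈ (0, d(λ))}` of a morphism `λ` (of degree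
`≤ (1,…,1)`). -/
def Qcube (lam : Λ.Mor) : Set Λ.Real :=
  { x | ∃ (t : Fin k → ℝ) (h : ∀ i, 0 ≤ t i ∧ t i ≤ (Λ.deg lam i : ℝ)),
      (∀ i, Λ.deg lam i = 1 → 0 < t i ∧ t i < 1) ∧ x = Λ.pt lam t h }

/-- The `r`-skeleton `X_Λ^r` of the topological realization. -/
def skel' (G : KGraph k) : ℕ → Set G.Real
  | 0 => ⋃ v ∈ { v : G.Mor | G.deg v = 0 }, G.Qcube v
  | (r+1) => skel' G r ∪
      ⋃ lam ∈ { lam : G.Mor | G.deg lam ≤ 1 ∧ ∑ i, G.deg lam i = r + 1 },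
        G.Qcube lam

/-- The `r`-skeleton (wrapper). -/
def skel (r : ℕ) : Set Λ.Real := skel' Λ r

/-- A `k`-graph is connected if any two vertices are joined by an undirected
path of morphisms. -/
def Connected : Prop :=
  ∀ u v : Λ.Mor, Λ.deg u = 0 → Λ.deg v = 0 →
    Relation.ReflTransGen (fun x y => ∃ e : Λ.Mor,
      (Λ.src e = x ∧ Λ.rng e = y) ∨ (Λ.src e = y ∧ Λ.rng e = x)) u v

end KGraph

/-- A morphism of `k`-graphs: a degree-preserving functor. -/
@[ext]
structure KGraphHom {k : ℕ} (Λ Γ : KGraph k) where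
  toFun : Λ.Mor → Γ.Mor
  map_src : ∀ a, toFun (Λ.src a) = Γ.src (toFun a)
  map_rng : ∀ a, toFun (Λ.rng a) = Γ.rng (toFun a)
  map_comp : ∀ a b, Λ.src a = Λ.rng b →
    toFun (Λ.comp a b) = Γ.comp (toFun a) (toFun b)
  map_deg : ∀ a, Γ.deg (toFun a) = Λ.deg a

namespace KGraphHom

variable {k : ℕ} {Λ Γ Θ : KGraph k}

/-- The identity `k`-graph morphism. -/
def id (Λ : KGraph k) : KGraphHom Λ Λ :=
  ⟨fun a => a, fun _ => rfl, fun _ => rfl, fun _ _ _ => rfl, fun _ => rfl⟩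

/-- Composition of `k`-graph morphisms. -/
def comp (ψ : KGraphHom Γ Θ) (φ : KGraphHom Λ Γ) : KGraphHom Λ Θ where
  toFun := ψ.toFun ∘ φ.toFun
  map_src a := by simp [Function.comp, φ.map_src, ψ.map_src]
  map_rng a := by simp [Function.comp, φ.map_rng, ψ.map_rng]
  map_comp a b h := by
    simp only [Function.comp]
    rw [φ.map_comp a b h, ψ.map_comp _ _ (by rw [← φ.map_src, ← φ.map_rng, h])]
  map_deg a := by simp [Function.comp, φ.map_deg, ψ.map_deg]

/-- The induced map on points `(λ, t) ↦ (φ(λ), t)`. -/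
def pointMap (φ : KGraphHom Λ Γ) : Λ.Points → Γ.Points :=
  fun p => ⟨φ.toFun p.1, ⟨p.2.1, fun i => by rw [φ.map_deg]; exact p.2.2 i⟩⟩

/-- The induced map `φ̃ : X_Λ → X_Γ` on topological realizations,
`φ̃([λ,t]) = [φ(λ), t]` (defined via choice of representatives). -/
noncomputable def real (φ : KGraphHom Λ Γ) : Λ.Real → Γ.Real :=
  fun x => Quotient.mk Γ.ptSetoid (φ.pointMap (Quotient.out x))

end KGraphHom

/-- A covering of `k`-graphs: a surjective degree-preserving functor
`p : Ω → Λ` mapping `Ωv` bijectively onto `Λp(v)` and `vΩ` bijectively onto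
`p(v)Λ` for every vertex `v` of `Ω`. -/
def KGraphHom.IsCovering {k : ℕ} {Ω Λ : KGraph k} (p : KGraphHom Ω Λ) : Prop :=
  Function.Surjective p.toFun ∧
    ∀ v : Ω.Mor, Ω.deg v = 0 →
      Set.BijOn p.toFun { a | Ω.src a = v } { b | Λ.src b = p.toFun v } ∧
      Set.BijOn p.toFun { a | Ω.rng a = v } { b | Λ.rng b = p.toFun v }

namespace KGraph

variable {k : ℕ} {Λ : KGraph k}

/-- Existence of a factorization witnessing `seg`. -/
def SegEx (Λ : KGraph k) (a : Λ.Mor) (m n : Fin k → ℕ) : Prop :=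
  ∃ b : Λ.Mor, Λ.deg b = n - m ∧ ∃ x y : Λ.Mor,
      Λ.deg x = m ∧ Λ.src x = Λ.rng b ∧ Λ.src b = Λ.rng y ∧
      a = Λ.comp x (Λ.comp b y)

theorem seg_unique {a : Λ.Mor} {m n : Fin k → ℕ} {b x y b' x' y' : Λ.Mor}
    (hb : Λ.deg b = n - m) (hx : Λ.deg x = m) (hxb : Λ.src x = Λ.rng b)
    (hby : Λ.src b = Λ.rng y) (ha : a = Λ.comp x (Λ.comp b y))
    (hb' : Λ.deg b' = n - m) (hx' : Λ.deg x' = m) (hxb' : Λ.src x' = Λ.rng b')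
    (hby' : Λ.src b' = Λ.rng y') (ha' : a = Λ.comp x' (Λ.comp b' y')) :
    b = b' := by
  have hrc : Λ.rng (Λ.comp b y) = Λ.rng b := Λ.rng_comp b y hby
  have hrc' : Λ.rng (Λ.comp b' y') = Λ.rng b' := Λ.rng_comp b' y' hby'
  have hdc : Λ.deg (Λ.comp b y) = Λ.deg b + Λ.deg y := Λ.deg_comp b y hby
  have hdc' : Λ.deg (Λ.comp b' y') = Λ.deg b' + Λ.deg y' := Λ.deg_comp b' y' hby'
  have hda : Λ.deg a = m + Λ.deg (Λ.comp b y) := by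
    rw [ha, Λ.deg_comp x _ (by rw [hxb, hrc]), hx]
  have hda' : Λ.deg a = m + Λ.deg (Λ.comp b' y') := by
    rw [ha', Λ.deg_comp x' _ (by rw [hxb', hrc']), hx']
  have hcc : Λ.deg (Λ.comp b' y') = Λ.deg (Λ.comp b y) := by
    funext i
    have e1 : Λ.deg a i = m i + Λ.deg (Λ.comp b y) i := by
      rw [hda]; simp [Pi.add_apply]
    have e2 : Λ.deg a i = m i + Λ.deg (Λ.comp b' y') i := by
      rw [hda']; simp [Pi.add_apply]
    omega
  obtain ⟨p, -, hup⟩ := Λ.factor a m (Λ.deg (Λ.comp b y)) hda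
  have h1 := hup (x, Λ.comp b y) ⟨hx, rfl, by rw [hxb, hrc], ha.symm⟩
  have h2 := hup (x', Λ.comp b' y') ⟨hx', hcc, by rw [hxb', hrc'], ha'.symm⟩
  have hC : Λ.comp b y = Λ.comp b' y' := congrArg Prod.snd (h1.trans h2.symm)
  have hdy : Λ.deg (Λ.comp b y) = (n - m) + Λ.deg y := by rw [hdc, hb]
  obtain ⟨q, -, huq⟩ := Λ.factor (Λ.comp b y) (n - m) (Λ.deg y) hdy
  have g1 := huq (b, y) ⟨hb, rfl, hby, rfl⟩
  have g2 := huq (b', y') ⟨hb', by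
      show Λ.deg y' = Λ.deg y
      funext i
      have e1 : Λ.deg (Λ.comp b y) i = Λ.deg b i + Λ.deg y i := by
        rw [hdc]; simp [Pi.add_apply]
      have e2 : Λ.deg (Λ.comp b' y') i = Λ.deg b' i + Λ.deg y' i := by
        rw [hdc']; simp [Pi.add_apply]
      have e3 : Λ.deg b i = n i - m i := by rw [hb]; simp [Pi.sub_apply]
      have e4 : Λ.deg b' i = n i - m i := by rw [hb']; simp [Pi.sub_apply]
      have e5 : Λ.deg (Λ.comp b y) i = Λ.deg (Λ.comp b' y') i := by rw [hC]
      omega, hby', hC.symm⟩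
  exact congrArg Prod.fst (g1.trans g2.symm)

theorem seg_eq {a b x y : Λ.Mor} {m n : Fin k → ℕ}
    (hb : Λ.deg b = n - m) (hx : Λ.deg x = m) (hxb : Λ.src x = Λ.rng b)
    (hby : Λ.src b = Λ.rng y) (ha : a = Λ.comp x (Λ.comp b y)) :
    Λ.seg a m n = b := by
  have hE : ∃ b0 : Λ.Mor, Λ.deg b0 = n - m ∧ ∃ x0 y0 : Λ.Mor,
      Λ.deg x0 = m ∧ Λ.src x0 = Λ.rng b0 ∧ Λ.src b0 = Λ.rng y0 ∧
      a = Λ.comp x0 (Λ.comp b0 y0) := ⟨b, hb, x, y, hx, hxb, hby, ha⟩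
  rw [KGraph.seg, dif_pos hE]
  obtain ⟨hdb, x', y', hx', hxb', hby', ha'⟩ := hE.choose_spec
  exact seg_unique hdb hx' hxb' hby' ha' hb hx hxb hby ha

theorem segEx_of_le {a : Λ.Mor} {m n : Fin k → ℕ} (hmn : m ≤ n) (hn : n ≤ Λ.deg a) :
    SegEx Λ a m n := by
  have hma : m ≤ Λ.deg a := hmn.trans hn
  obtain ⟨⟨x, c⟩, ⟨hx, hc, hsx, hcomp⟩, -⟩ := Λ.factor a m (Λ.deg a - m)
    (by funext i; have h1 : m i ≤ Λ.deg a i := hma i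
        simp only [Pi.add_apply, Pi.sub_apply]; omega)
  obtain ⟨⟨b, y⟩, ⟨hb, hy, hsb, hcy⟩, -⟩ := Λ.factor c (n - m) (Λ.deg a - n)
    (by rw [hc]; funext i
        have h1 : m i ≤ n i := hmn i; have h2 : n i ≤ Λ.deg a i := hn i
        simp only [Pi.add_apply, Pi.sub_apply]; omega)
  refine ⟨b, hb, x, y, hx, ?_, hsb, ?_⟩
  · rw [hsx, ← hcy, Λ.rng_comp b y hsb]
  · rw [← hcomp, hcy]

/-- The defining factorization of `seg`. -/
theorem seg_spec {a : Λ.Mor} {m n : Fin k → ℕ} (hE : SegEx Λ a m n) :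
    Λ.deg (Λ.seg a m n) = n - m ∧ ∃ x y : Λ.Mor,
      Λ.deg x = m ∧ Λ.src x = Λ.rng (Λ.seg a m n) ∧
      Λ.src (Λ.seg a m n) = Λ.rng y ∧ a = Λ.comp x (Λ.comp (Λ.seg a m n) y) := by
  obtain ⟨b, hb, x, y, hx, hxb, hby, ha⟩ := hE
  rw [seg_eq hb hx hxb hby ha]
  exact ⟨hb, x, y, hx, hxb, hby, ha⟩

theorem deg_seg {a : Λ.Mor} {m n : Fin k → ℕ} (hmn : m ≤ n) (hn : n ≤ Λ.deg a) :
    Λ.deg (Λ.seg a m n) = n - m := (seg_spec (segEx_of_le hmn hn)).1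

theorem seg_self (a : Λ.Mor) : Λ.seg a 0 (Λ.deg a) = a :=
  seg_eq (by funext i; simp) (Λ.deg_rng a) (Λ.src_rng a) (Λ.rng_src a).symm
    (by rw [Λ.comp_id, Λ.id_comp])

theorem seg_seg {a : Λ.Mor} {m n p q : Fin k → ℕ} (hmn : m ≤ n) (hn : n ≤ Λ.deg a)
    (hpq : p ≤ q) (hq : q ≤ n - m) :
    Λ.seg (Λ.seg a m n) p q = Λ.seg a (m + p) (m + q) := by
  obtain ⟨hdb, x, y, hx, hxb, hby, ha⟩ := seg_spec (segEx_of_le hmn hn)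
  set b := Λ.seg a m n with hbdef
  obtain ⟨hdc, u, w, hu, huc, hcw, hb2⟩ := seg_spec (segEx_of_le hpq (hdb ▸ hq))
  set c := Λ.seg b p q with hcdef
  have hscw : Λ.src (Λ.comp c w) = Λ.src w := Λ.src_comp c w hcw
  have hrcw : Λ.rng (Λ.comp c w) = Λ.rng c := Λ.rng_comp c w hcw
  have hsb : Λ.src b = Λ.src w := by rw [hb2, Λ.src_comp u _ (by rw [huc, hrcw]), hscw]
  have hwy : Λ.src w = Λ.rng y := by rw [← hsb]; exact hby
  have hrb : Λ.rng b = Λ.rng u := by rw [hb2, Λ.rng_comp u _ (by rw [huc, hrcw])]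
  have hxu : Λ.src x = Λ.rng u := by rw [hxb, hrb]
  have hrwy : Λ.rng (Λ.comp w y) = Λ.rng w := Λ.rng_comp w y hwy
  have hcwy : Λ.src c = Λ.rng (Λ.comp w y) := by rw [hrwy, hcw]
  have hrZ : Λ.rng (Λ.comp c (Λ.comp w y)) = Λ.rng c := Λ.rng_comp c _ hcwy
  refine (seg_eq (b := c) (x := Λ.comp x u) (y := Λ.comp w y) ?_ ?_ ?_ hcwy ?_).symm ▸ rfl
  · rw [hdc]; funext i
    have e1 : p i ≤ q i := hpq i
    have e2 : q i ≤ n i - m i := by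
      have := hq i; simpa [Pi.sub_apply] using this
    have e3 : m i ≤ n i := hmn i
    simp only [Pi.sub_apply, Pi.add_apply]; omega
  · rw [Λ.deg_comp x u hxu, hx, hu]
  · rw [Λ.src_comp x u hxu, huc]
  · rw [ha, hb2]
    rw [Λ.comp_assoc u (Λ.comp c w) y (by rw [huc, hrcw]) (by rw [hscw, hwy])]
    rw [Λ.comp_assoc c w y hcw hwy]
    rw [← Λ.comp_assoc x u (Λ.comp c (Λ.comp w y)) hxu (by rw [hrZ, huc])]


end KGraph

namespace KGraph

variable {k : ℕ} {Λ : KGraph k}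

/-! ### Real floor/ceil/frac coordinate lemmas -/

theorem toNat_floor_cast {x : ℝ} (hx : 0 ≤ x) : ((⌊x⌋.toNat : ℕ) : ℝ) = (⌊x⌋ : ℝ) := by
  exact_mod_cast congrArg (Int.cast : ℤ → ℝ) (Int.toNat_of_nonneg (Int.floor_nonneg.2 hx))

theorem frac_eq_fract {s : Fin k → ℝ} {i : Fin k} (hx : 0 ≤ s i) :
    frac s i = Int.fract (s i) := by
  show s i - ((⌊s i⌋.toNat : ℕ) : ℝ) = Int.fract (s i)
  rw [toNat_floor_cast hx, Int.fract]

theorem frac_nonneg' {s : Fin k → ℝ} {i : Fin k} (hx : 0 ≤ s i) : 0 ≤ frac s i := by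
  rw [frac_eq_fract hx]; exact Int.fract_nonneg _

theorem frac_lt_one' {s : Fin k → ℝ} {i : Fin k} (hx : 0 ≤ s i) : frac s i < 1 := by
  rw [frac_eq_fract hx]; exact Int.fract_lt_one _

theorem ceil_eq_floor_add_one_of_fract_pos {x : ℝ} (h : 0 < Int.fract x) :
    ⌈x⌉ = ⌊x⌋ + 1 := by
  refine le_antisymm (Int.ceil_le_floor_add_one x) ?_
  have h1 : (⌊x⌋ : ℝ) < x := by
    have := Int.fract_add_floor x
    have h2 := Int.floor_le x
    rw [Int.fract] at h; linarith [Int.floor_le x]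
  have : (⌊x⌋ : ℝ) < (⌈x⌉ : ℝ) := lt_of_lt_of_le h1 (Int.le_ceil x)
  exact_mod_cast this

theorem ceil_eq_floor_of_fract_eq_zero {x : ℝ} (h : Int.fract x = 0) :
    ⌈x⌉ = ⌊x⌋ := by
  have hx : x = (⌊x⌋ : ℝ) := by rw [Int.fract] at h; linarith
  have h2 : ⌈x⌉ = ⌈((⌊x⌋ : ℤ) : ℝ)⌉ := by rw [← hx]
  rw [h2, Int.ceil_intCast]

theorem fl_le_ce {s : Fin k → ℝ} : fl s ≤ ce s := fun i =>
  Int.toNat_le_toNat (Int.floor_le_ceil (s i))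

theorem ce_le_of_le {s : Fin k → ℝ} {d : Fin k → ℕ} (h : ∀ i, s i ≤ (d i : ℝ)) :
    ce s ≤ d := by
  intro i
  have : ⌈s i⌉ ≤ (d i : ℤ) := Int.ceil_le.2 (by exact_mod_cast h i)
  show (⌈s i⌉).toNat ≤ d i
  omega

theorem ce_le_fl_add_one {s : Fin k → ℝ} (hs : ∀ i, 0 ≤ s i) : ∀ i, ce s i ≤ fl s i + 1 := by
  intro i
  have h1 : ⌈s i⌉ ≤ ⌊s i⌋ + 1 := Int.ceil_le_floor_add_one (s i)
  have h2 : (0 : ℤ) ≤ ⌊s i⌋ := Int.floor_nonneg.2 (hs i)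
  show (⌈s i⌉).toNat ≤ (⌊s i⌋).toNat + 1
  omega

theorem ce_eq_fl_of_frac_eq_zero {s : Fin k → ℝ} {i : Fin k} (hx : 0 ≤ s i)
    (h : frac s i = 0) : ce s i = fl s i := by
  rw [frac_eq_fract hx] at h
  show (⌈s i⌉).toNat = (⌊s i⌋).toNat
  rw [ceil_eq_floor_of_fract_eq_zero h]

theorem ce_eq_fl_add_one_of_frac_pos {s : Fin k → ℝ} {i : Fin k} (hx : 0 ≤ s i)
    (h : 0 < frac s i) : ce s i = fl s i + 1 := by
  rw [frac_eq_fract hx] at h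
  have h2 : (0 : ℤ) ≤ ⌊s i⌋ := Int.floor_nonneg.2 hx
  show (⌈s i⌉).toNat = (⌊s i⌋).toNat + 1
  rw [ceil_eq_floor_add_one_of_fract_pos h]; omega

theorem fl_frac {s : Fin k → ℝ} (hs : ∀ i, 0 ≤ s i) : fl (frac s) = 0 := by
  funext i
  show (⌊frac s i⌋).toNat = 0
  rw [Int.floor_eq_zero_iff.2 ⟨frac_nonneg' (hs i), frac_lt_one' (hs i)⟩]
  rfl

theorem frac_frac {s : Fin k → ℝ} (hs : ∀ i, 0 ≤ s i) : frac (frac s) = frac s := by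
  funext i
  show frac s i - ((⌊frac s i⌋.toNat : ℕ) : ℝ) = frac s i
  rw [Int.floor_eq_zero_iff.2 ⟨frac_nonneg' (hs i), frac_lt_one' (hs i)⟩]
  simp

theorem ce_frac {s : Fin k → ℝ} (hs : ∀ i, 0 ≤ s i) : ce (frac s) = ce s - fl s := by
  funext i
  rcases eq_or_lt_of_le (frac_nonneg' (hs i)) with h | h
  · have h0 : frac s i = 0 := h.symm
    show (⌈frac s i⌉).toNat = ce s i - fl s i
    rw [h0, ce_eq_fl_of_frac_eq_zero (hs i) h0]
    simp
  · show (⌈frac s i⌉).toNat = ce s i - fl s i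
    have h1 : ⌈frac s i⌉ = 1 := by
      refine Int.ceil_eq_iff.2 ⟨by push_cast; linarith, ?_⟩
      exact_mod_cast (frac_lt_one' (hs i)).le
    rw [h1, ce_eq_fl_add_one_of_frac_pos (hs i) h]
    omega

/-! ### Canonical points -/

theorem deg_seg_flce {a : Λ.Mor} {s : Fin k → ℝ}
    (hs : ∀ i, 0 ≤ s i ∧ s i ≤ (Λ.deg a i : ℝ)) :
    Λ.deg (Λ.seg a (fl s) (ce s)) = ce s - fl s :=
  deg_seg fl_le_ce (ce_le_of_le fun i => (hs i).2)

theorem frac_mem_seg {a : Λ.Mor} {s : Fin k → ℝ}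
    (hs : ∀ i, 0 ≤ s i ∧ s i ≤ (Λ.deg a i : ℝ)) :
    ∀ i, 0 ≤ frac s i ∧ frac s i ≤ ((Λ.deg (Λ.seg a (fl s) (ce s)) i : ℕ) : ℝ) := by
  intro i
  refine ⟨frac_nonneg' (hs i).1, ?_⟩
  rw [deg_seg_flce hs]
  rcases eq_or_lt_of_le (frac_nonneg' (hs i).1) with h | h
  · rw [← h]; positivity
  · have := ce_eq_fl_add_one_of_frac_pos (hs i).1 h
    have h2 : (ce s - fl s) i = 1 := by simp only [Pi.sub_apply]; omega
    rw [h2]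
    exact_mod_cast (frac_lt_one' (hs i).1).le

theorem deg_seg_flce_le_one {a : Λ.Mor} {s : Fin k → ℝ}
    (hs : ∀ i, 0 ≤ s i ∧ s i ≤ (Λ.deg a i : ℝ)) :
    Λ.deg (Λ.seg a (fl s) (ce s)) ≤ 1 := by
  rw [deg_seg_flce hs]
  intro i
  have := ce_le_fl_add_one (fun i => (hs i).1) i
  simp only [Pi.sub_apply, Pi.one_apply]
  omega

theorem pt_eq_canonical {a : Λ.Mor} {s : Fin k → ℝ}
    (hs : ∀ i, 0 ≤ s i ∧ s i ≤ (Λ.deg a i : ℝ)) :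
    Λ.pt a s hs = Λ.pt (Λ.seg a (fl s) (ce s)) (frac s) (frac_mem_seg hs) := by
  refine Quot.sound ⟨?_, (frac_frac fun i => (hs i).1).symm⟩
  rw [fl_frac fun i => (hs i).1, ce_frac fun i => (hs i).1, ← deg_seg_flce hs,
    seg_self]

theorem pt_mem_Qcube_seg {a : Λ.Mor} {s : Fin k → ℝ}
    (hs : ∀ i, 0 ≤ s i ∧ s i ≤ (Λ.deg a i : ℝ)) :
    Λ.pt a s hs ∈ Λ.Qcube (Λ.seg a (fl s) (ce s)) := by
  refine ⟨frac s, frac_mem_seg hs, ?_, pt_eq_canonical hs⟩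
  intro i hi
  rw [deg_seg_flce hs] at hi
  simp only [Pi.sub_apply] at hi
  have h1 : 0 < frac s i := by
    rcases eq_or_lt_of_le (frac_nonneg' (hs i).1) with h | h
    · exfalso
      have := ce_eq_fl_of_frac_eq_zero (hs i).1 h.symm
      omega
    · exact h
  exact ⟨h1, frac_lt_one' (hs i).1⟩

theorem canonical_data {lam : Λ.Mor} {t : Fin k → ℝ} (hd : Λ.deg lam ≤ 1)
    (h : ∀ i, 0 ≤ t i ∧ t i ≤ (Λ.deg lam i : ℝ))
    (hc : ∀ i, Λ.deg lam i = 1 → 0 < t i ∧ t i < 1) :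
    fl t = 0 ∧ ce t = Λ.deg lam ∧ frac t = t ∧ Λ.seg lam (fl t) (ce t) = lam := by
  have ht01 : ∀ i, 0 ≤ t i ∧ t i < 1 := by
    intro i
    refine ⟨(h i).1, ?_⟩
    rcases Nat.le_one_iff_eq_zero_or_eq_one.1 (hd i) with h0 | h1
    · have := (h i).2
      rw [h0] at this
      norm_num at this
      linarith [this, (h i).1]
    · exact (hc i h1).2
  have hfl : fl t = 0 := by
    funext i
    show (⌊t i⌋).toNat = 0
    rw [Int.floor_eq_zero_iff.2 ⟨(ht01 i).1, (ht01 i).2⟩]; rfl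
  have hce : ce t = Λ.deg lam := by
    funext i
    show (⌈t i⌉).toNat = Λ.deg lam i
    rcases Nat.le_one_iff_eq_zero_or_eq_one.1 (hd i) with h0 | h1
    · have ht0 : t i = 0 := by
        have := (h i).2; rw [h0] at this; norm_num at this
        linarith [(h i).1]
      rw [ht0, h0]; simp
    · have := hc i h1
      have : ⌈t i⌉ = 1 := by
        refine Int.ceil_eq_iff.2 ⟨by push_cast; linarith [this.1], ?_⟩
        exact_mod_cast (ht01 i).2.le
      rw [this, h1]; rfl
  have hfr : frac t = t := by
    funext i
    show t i - ((⌊t i⌋.toNat : ℕ) : ℝ) = t i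
    rw [Int.floor_eq_zero_iff.2 ⟨(ht01 i).1, (ht01 i).2⟩]; simp
  refine ⟨hfl, hce, hfr, ?_⟩
  rw [hfl, hce, seg_self]

theorem pt_canonical_inj {lam lam' : Λ.Mor} {t t' : Fin k → ℝ}
    (hd : Λ.deg lam ≤ 1) (hd' : Λ.deg lam' ≤ 1)
    {h : ∀ i, 0 ≤ t i ∧ t i ≤ (Λ.deg lam i : ℝ)}
    {h' : ∀ i, 0 ≤ t' i ∧ t' i ≤ (Λ.deg lam' i : ℝ)}
    (hc : ∀ i, Λ.deg lam i = 1 → 0 < t i ∧ t i < 1)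
    (hc' : ∀ i, Λ.deg lam' i = 1 → 0 < t' i ∧ t' i < 1)
    (heq : Λ.pt lam t h = Λ.pt lam' t' h') : lam = lam' ∧ t = t' := by
  obtain ⟨hseg, hfr⟩ := Quotient.exact heq
  obtain ⟨-, -, hfr1, hseg1⟩ := canonical_data hd h hc
  obtain ⟨-, -, hfr2, hseg2⟩ := canonical_data hd' h' hc'
  constructor
  · rw [← hseg1, ← hseg2]; exact hseg
  · rw [← hfr1, ← hfr2]; exact hfr

end KGraph

namespace KGraph

variable {k : ℕ} {Λ : KGraph k}

/-! ### Quotient topology -/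

theorem isQuotientMap_mk (Λ : KGraph k) :
    Topology.IsQuotientMap (Quotient.mk Λ.ptSetoid : Λ.Points → Λ.Real) := by
  letI := Λ.ptSetoid
  exact isQuotientMap_quotient_mk'

theorem continuous_mk (Λ : KGraph k) :
    Continuous (Quotient.mk Λ.ptSetoid : Λ.Points → Λ.Real) :=
  (isQuotientMap_mk Λ).continuous

/-! ### The fractional-coordinate functions on the realization -/

/-- The `i`-th fractional coordinate, a well-defined function on `X_Λ`. -/
noncomputable def gfr (Λ : KGraph k) (i : Fin k) : Λ.Real → ℝ :=
  Quotient.lift (fun p : Λ.Points => frac p.2.1 i) fun _ _ h => congrFun h.2 i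

theorem gfr_pt (i : Fin k) (a : Λ.Mor) (t : Fin k → ℝ)
    (h : ∀ i, 0 ≤ t i ∧ t i ≤ (Λ.deg a i : ℝ)) :
    gfr Λ i (Λ.pt a t h) = frac t i := rfl

theorem isOpen_gfr_preimage (i : Fin k) {α β : ℝ} (hα : 0 ≤ α) (hβ : β ≤ 1) :
    IsOpen (gfr Λ i ⁻¹' Set.Ioo α β) := by
  refine (isQuotientMap_mk Λ).isOpen_preimage.1 ?_
  change IsOpen ((fun p : Λ.Points => frac p.2.1 i) ⁻¹' Set.Ioo α β)
  refine isOpen_sigma_iff.2 ?_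
  intro a
  have hset : (Sigma.mk a ⁻¹' ((fun p : Λ.Points => frac p.2.1 i) ⁻¹' Set.Ioo α β))
      = Subtype.val ⁻¹' {s : Fin k → ℝ | s i ∈ ⋃ n : ℕ, Set.Ioo ((n : ℝ) + α) ((n : ℝ) + β)} := by
    ext ⟨s, hsm⟩
    simp only [Set.mem_preimage, Set.mem_setOf_eq, Set.mem_iUnion, Set.mem_Ioo]
    constructor
    · rintro ⟨h1, h2⟩
      refine ⟨(⌊s i⌋).toNat, ?_, ?_⟩
      · have := toNat_floor_cast (hsm i).1
        have hfl := Int.floor_le (s i)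
        show (((⌊s i⌋).toNat : ℕ) : ℝ) + α < s i
        have : frac s i = s i - (((⌊s i⌋).toNat : ℕ) : ℝ) := rfl
        linarith [h1, this]
      · have : frac s i = s i - (((⌊s i⌋).toNat : ℕ) : ℝ) := rfl
        linarith [h2, this]
    · rintro ⟨n, h1, h2⟩
      have hfl : ⌊s i⌋ = (n : ℤ) := by
        rw [Int.floor_eq_iff]
        constructor
        · push_cast; linarith
        · push_cast; linarith
      have hfr : frac s i = s i - (n : ℝ) := by
        show s i - ((⌊s i⌋.toNat : ℕ) : ℝ) = s i - (n : ℝ)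
        rw [hfl]; simp
      show α < frac s i ∧ frac s i < β
      rw [hfr]
      constructor <;> linarith
  refine (congrArg IsOpen hset).mpr ?_
  exact (IsOpen.preimage (continuous_apply i)
    (isOpen_iUnion fun n => isOpen_Ioo)).preimage continuous_subtype_val

theorem continuousAt_gfr {i : Fin k} {x : Λ.Real} (h0 : 0 < gfr Λ i x)
    (h1 : gfr Λ i x < 1) : ContinuousAt (gfr Λ i) x := by
  intro W hW
  rw [mem_nhds_iff_exists_Ioo_subset] at hW
  obtain ⟨α, β, hx, hsub⟩ := hW
  set y := gfr Λ i x with hy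
  set α' := max α (y / 2) with hα'
  set β' := min β ((y + 1) / 2) with hβ'
  have hmem : x ∈ gfr Λ i ⁻¹' Set.Ioo α' β' := by
    constructor
    · exact max_lt hx.1 (by rw [← hy]; linarith)
    · exact lt_min hx.2 (by rw [← hy]; linarith)
  have hopen : IsOpen (gfr Λ i ⁻¹' Set.Ioo α' β') :=
    isOpen_gfr_preimage i (le_trans (by linarith) (le_max_right α (y / 2)))
      (le_trans (min_le_right β ((y + 1) / 2)) (by linarith))
  refine Filter.mem_of_superset (hopen.mem_nhds hmem) ?_
  intro z hz
  exact hsub ⟨lt_of_le_of_lt (le_max_left α (y / 2)) hz.1,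
    lt_of_lt_of_le hz.2 (min_le_left β ((y + 1) / 2))⟩

theorem gfr_canonical {lam : Λ.Mor} {t : Fin k → ℝ} (hd : Λ.deg lam ≤ 1)
    {h : ∀ i, 0 ≤ t i ∧ t i ≤ (Λ.deg lam i : ℝ)}
    (hc : ∀ i, Λ.deg lam i = 1 → 0 < t i ∧ t i < 1) (i : Fin k) :
    gfr Λ i (Λ.pt lam t h) = t i := by
  rw [gfr_pt, (canonical_data hd h hc).2.2.1]

/-! ### Skeleton lemmas -/

theorem skel'_mono (G : KGraph k) {r r' : ℕ} (h : r ≤ r') : skel' G r ⊆ skel' G r' := by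
  induction r' with
  | zero => exact Nat.le_zero.1 h ▸ subset_rfl
  | succ n ih =>
    rcases Nat.lt_or_ge r (n + 1) with h' | h'
    · exact (ih (Nat.lt_succ_iff.1 h')).trans Set.subset_union_left
    · exact Nat.le_antisymm h h' ▸ subset_rfl

theorem Qcube_subset_skel' {lam : Λ.Mor} (hd : Λ.deg lam ≤ 1) :
    Λ.Qcube lam ⊆ skel' Λ (∑ i, Λ.deg lam i) := by
  cases hsum : ∑ i, Λ.deg lam i with
  | zero =>
    have hz : Λ.deg lam = 0 := by
      funext i
      exact (Finset.sum_eq_zero_iff.1 hsum) i (Finset.mem_univ i)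
    exact Set.subset_biUnion_of_mem
      (show lam ∈ {v : Λ.Mor | Λ.deg v = 0} from hz)
  | succ r =>
    exact Set.subset_union_of_subset_right
      (Set.subset_biUnion_of_mem (show lam ∈ {lam : Λ.Mor |
        Λ.deg lam ≤ 1 ∧ ∑ i, Λ.deg lam i = r + 1} from ⟨hd, hsum⟩)) _

theorem Qcube_subset_skel {lam : Λ.Mor} (hd : Λ.deg lam ≤ 1) {r : ℕ}
    (hr : ∑ i, Λ.deg lam i ≤ r) : Λ.Qcube lam ⊆ Λ.skel r :=
  (Qcube_subset_skel' hd).trans (skel'_mono Λ hr)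

end KGraph

namespace KGraph

variable {k : ℕ} {Λ : KGraph k} {lam : Λ.Mor}

/-- The canonical parameter domain of the cell `Q_lam`. -/
def cellDom (Λ : KGraph k) (lam : Λ.Mor) :
    Set ↥{ t : Fin k → ℝ | ∀ i, 0 ≤ t i ∧ t i ≤ (Λ.deg lam i : ℝ) } :=
  { tp | ∀ i, Λ.deg lam i = 1 → 0 < tp.1 i ∧ tp.1 i < 1 }

theorem deg_eq_zero_of_ne_one (hd : Λ.deg lam ≤ 1) {i : Fin k}
    (hi : ¬ Λ.deg lam i = 1) : Λ.deg lam i = 0 := by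
  have := hd i
  simp only [Pi.one_apply] at this
  omega

theorem coord_zero {t : Fin k → ℝ} (h : ∀ i, 0 ≤ t i ∧ t i ≤ (Λ.deg lam i : ℝ))
    (hd : Λ.deg lam ≤ 1) {i : Fin k} (hi : ¬ Λ.deg lam i = 1) : t i = 0 := by
  have h0 := deg_eq_zero_of_ne_one hd hi
  have h2 := (h i).2
  rw [h0] at h2
  norm_num at h2
  exact le_antisymm h2 (h i).1

theorem gfr_bounds {x : Λ.Real} (hx : x ∈ Λ.Qcube lam) (hd : Λ.deg lam ≤ 1) (i : Fin k)
    (hi : Λ.deg lam i = 1) : 0 < gfr Λ i x ∧ gfr Λ i x < 1 := by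
  obtain ⟨t, h, hc, rfl⟩ := hx
  rw [gfr_canonical hd hc]
  exact hc i hi

theorem pt_congr {a : Λ.Mor} {t t' : Fin k → ℝ}
    {h : ∀ i, 0 ≤ t i ∧ t i ≤ (Λ.deg a i : ℝ)} {h' : ∀ i, 0 ≤ t' i ∧ t' i ≤ (Λ.deg a i : ℝ)}
    (e : t = t') : Λ.pt a t h = Λ.pt a t' h' := by subst e; rfl

/-- The map `t ↦ [lam, t]` from the canonical cell domain to the open cell. -/
noncomputable def cellFun (Λ : KGraph k) (lam : Λ.Mor) (u : ↥(cellDom Λ lam)) :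
    ↥(Λ.Qcube lam) :=
  ⟨Λ.pt lam u.1.1 u.1.2, ⟨u.1.1, u.1.2, u.2, rfl⟩⟩

noncomputable def cellInv (hd : Λ.deg lam ≤ 1) (x : ↥(Λ.Qcube lam)) : ↥(cellDom Λ lam) := by
  refine ⟨⟨fun i => if Λ.deg lam i = 1 then gfr Λ i x.1 else 0, ?_⟩, ?_⟩
  · intro i
    by_cases hi : Λ.deg lam i = 1
    · have hb := gfr_bounds x.2 hd i hi
      simp only [if_pos hi, hi]
      exact ⟨hb.1.le, by push_cast; linarith [hb.2]⟩
    · simp only [if_neg hi]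
      exact ⟨le_refl 0, by positivity⟩
  · intro i hi
    simp only [if_pos hi]
    exact gfr_bounds x.2 hd i hi

/-- The homeomorphism between the canonical cell domain and the open cell. -/
noncomputable def cellHomeo (hd : Λ.deg lam ≤ 1) : ↥(cellDom Λ lam) ≃ₜ ↥(Λ.Qcube lam) where
  toFun := cellFun Λ lam
  invFun := cellInv hd
  left_inv u := by
    apply Subtype.ext; apply Subtype.ext
    funext i
    show (if Λ.deg lam i = 1 then gfr Λ i (Λ.pt lam u.1.1 u.1.2) else 0) = u.1.1 i
    by_cases hi : Λ.deg lam i = 1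
    · rw [if_pos hi, gfr_canonical hd u.2]
    · rw [if_neg hi, coord_zero u.1.2 hd hi]
  right_inv x := by
    apply Subtype.ext
    obtain ⟨t, h, hc, hx⟩ := x.2
    show Λ.pt lam _ _ = x.1
    rw [hx]
    apply pt_congr
    funext i
    show (if Λ.deg lam i = 1 then gfr Λ i x.1 else 0) = t i
    by_cases hi : Λ.deg lam i = 1
    · rw [if_pos hi, hx, gfr_canonical hd hc]
    · rw [if_neg hi, coord_zero h hd hi]
  continuous_toFun := by
    apply Continuous.subtype_mk
    exact (continuous_mk Λ).comp (continuous_sigmaMk.comp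
      ((continuous_subtype_val.comp continuous_subtype_val).subtype_mk _))
  continuous_invFun := by
    apply Continuous.subtype_mk
    apply Continuous.subtype_mk
    apply continuous_pi
    intro i
    by_cases hi : Λ.deg lam i = 1
    · simp only [if_pos hi]
      rw [continuous_iff_continuousAt]
      intro x
      exact ((continuousAt_gfr (gfr_bounds x.2 hd i hi).1
        (gfr_bounds x.2 hd i hi).2).comp continuous_subtype_val.continuousAt :)
    · simp only [if_neg hi]
      exact continuous_const

/-- Reindexing equivalence for the coordinates of a cell. -/
noncomputable def cellIndexEquiv (hd : Λ.deg lam ≤ 1) :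
    {i : Fin k // Λ.deg lam i = 1} ≃ Fin (∑ i, Λ.deg lam i) :=
  Fintype.equivFinOfCardEq (by
    rw [Fintype.card_subtype, Finset.card_filter]
    refine Finset.sum_congr rfl fun i _ => ?_
    have := hd i
    simp only [Pi.one_apply] at this
    by_cases hi : Λ.deg lam i = 1
    · rw [if_pos hi, hi]
    · rw [if_neg hi]; omega)

/-- The reindexing homeomorphism between the canonical cell domain and the
standard open cube of the cell's dimension. -/
noncomputable def reindexHomeo (hd : Λ.deg lam ≤ 1) :
    ↥(cellDom Λ lam) ≃ₜ
      ↥{ u : Fin (∑ i, Λ.deg lam i) → ℝ | ∀ j, 0 < u j ∧ u j < 1 } where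
  toFun u := ⟨fun j => u.1.1 ((cellIndexEquiv hd).symm j).1,
    fun j => u.2 ((cellIndexEquiv hd).symm j).1 ((cellIndexEquiv hd).symm j).2⟩
  invFun v := by
    refine ⟨⟨fun i => if hi : Λ.deg lam i = 1 then v.1 (cellIndexEquiv hd ⟨i, hi⟩) else 0,
      ?_⟩, ?_⟩
    · intro i
      by_cases hi : Λ.deg lam i = 1
      · have hb := v.2 (cellIndexEquiv hd ⟨i, hi⟩)
        simp only [dif_pos hi, hi]
        exact ⟨hb.1.le, by push_cast; linarith [hb.2]⟩
      · simp only [dif_neg hi]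
        exact ⟨le_refl 0, by positivity⟩
    · intro i hi
      simp only [dif_pos hi]
      exact v.2 _
  left_inv u := by
    apply Subtype.ext; apply Subtype.ext
    funext i
    show (if hi : Λ.deg lam i = 1
      then u.1.1 (((cellIndexEquiv hd).symm (cellIndexEquiv hd ⟨i, hi⟩)).1) else 0) = u.1.1 i
    by_cases hi : Λ.deg lam i = 1
    · rw [dif_pos hi, (cellIndexEquiv hd).symm_apply_apply]
    · rw [dif_neg hi, coord_zero u.1.2 hd hi]
  right_inv v := by
    apply Subtype.ext
    funext j
    show (if hi : Λ.deg lam (((cellIndexEquiv hd).symm j).1) = 1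
      then v.1 (cellIndexEquiv hd ⟨((cellIndexEquiv hd).symm j).1, hi⟩) else 0) = v.1 j
    rw [dif_pos ((cellIndexEquiv hd).symm j).2, Subtype.coe_eta,
      (cellIndexEquiv hd).apply_symm_apply]
  continuous_toFun := by
    apply Continuous.subtype_mk
    apply continuous_pi
    intro j
    exact (continuous_apply _).comp (continuous_subtype_val.comp continuous_subtype_val)
  continuous_invFun := by
    apply Continuous.subtype_mk
    apply Continuous.subtype_mk
    apply continuous_pi
    intro i
    by_cases hi : Λ.deg lam i = 1
    · simp only [dif_pos hi]
      exact (continuous_apply _).comp continuous_subtype_val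
    · simp only [dif_neg hi]
      exact continuous_const

/-- The characteristic map of a cell. -/
noncomputable def charMap (Λ : KGraph k) (lam : Λ.Mor) :
    C(↥{ t : Fin k → ℝ | ∀ i, 0 ≤ t i ∧ t i ≤ (Λ.deg lam i : ℝ) }, Λ.Real) :=
  ⟨fun tp => Λ.pt lam tp.1 tp.2,
    (continuous_mk Λ).comp (continuous_sigmaMk.comp (continuous_subtype_val.subtype_mk _))⟩

end KGraph

namespace KGraph

variable {k : ℕ} {Λ : KGraph k} {lam : Λ.Mor}

/-- Membership of a point in the closed cell of `lam`, in terms of `seg`. -/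
theorem pt_mem_closedCell_iff {a : Λ.Mor} {s : Fin k → ℝ}
    (hs : ∀ i, 0 ≤ s i ∧ s i ≤ (Λ.deg a i : ℝ)) (hd : Λ.deg lam ≤ 1) :
    (∃ (t : Fin k → ℝ) (h : ∀ i, 0 ≤ t i ∧ t i ≤ (Λ.deg lam i : ℝ)),
        Λ.pt a s hs = Λ.pt lam t h) ↔
      ∃ ε δ : Fin k → ℕ, ε ≤ δ ∧ δ ≤ Λ.deg lam ∧
        Λ.seg a (fl s) (ce s) = Λ.seg lam ε δ := by
  constructor
  · rintro ⟨t, h, heq⟩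
    obtain ⟨hseg, -⟩ := Quotient.exact heq
    exact ⟨fl t, ce t, fl_le_ce, ce_le_of_le fun i => (h i).2, hseg⟩
  · rintro ⟨ε, δ, hεδ, hδ, hseg⟩
    have hs0 : ∀ i, 0 ≤ s i := fun i => (hs i).1
    have hdd : ce s - fl s = δ - ε := by
      rw [← deg_seg_flce hs, hseg, deg_seg hεδ hδ]
    set t : Fin k → ℝ := fun i => (ε i : ℝ) + frac s i with ht
    have hflt : ∀ i, ⌊t i⌋ = (ε i : ℤ) := by
      intro i
      show ⌊(ε i : ℝ) + frac s i⌋ = (ε i : ℤ)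
      rw [add_comm, Int.floor_add_natCast,
        Int.floor_eq_zero_iff.2 ⟨frac_nonneg' (hs0 i), frac_lt_one' (hs0 i)⟩]
      simp
    have hflt' : fl t = ε := by
      funext i
      show (⌊t i⌋).toNat = ε i
      rw [hflt i]; simp
    have hfrt : frac t = frac s := by
      funext i
      show t i - ((⌊t i⌋.toNat : ℕ) : ℝ) = frac s i
      rw [hflt i]
      show (ε i : ℝ) + frac s i - _ = frac s i
      simp
    have hdelta : ∀ i, 0 < frac s i → δ i = ε i + 1 := by
      intro i hf
      have h1 := ce_eq_fl_add_one_of_frac_pos (hs0 i) hf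
      have h2 := congrFun hdd i
      have h3 : ε i ≤ δ i := hεδ i
      simp only [Pi.sub_apply] at h2
      omega
    have hdelta0 : ∀ i, frac s i = 0 → δ i = ε i := by
      intro i hf
      have h1 := ce_eq_fl_of_frac_eq_zero (hs0 i) hf
      have h2 := congrFun hdd i
      have h3 : ε i ≤ δ i := hεδ i
      simp only [Pi.sub_apply] at h2
      omega
    have hcet : ce t = δ := by
      funext i
      show (⌈t i⌉).toNat = δ i
      rcases eq_or_lt_of_le (frac_nonneg' (hs0 i)) with hf | hf
      · have he : t i = ((ε i : ℕ) : ℝ) := by show (ε i : ℝ) + frac s i = _; rw [← hf]; ring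
        rw [he, Int.ceil_natCast, hdelta0 i hf.symm]; simp
      · have hc1 : ⌈t i⌉ = (ε i : ℤ) + 1 := by
          show ⌈(ε i : ℝ) + frac s i⌉ = _
          rw [add_comm, Int.ceil_add_natCast]
          have hone : ⌈frac s i⌉ = 1 := Int.ceil_eq_iff.2
            ⟨by push_cast; linarith, by exact_mod_cast (frac_lt_one' (hs0 i)).le⟩
          rw [hone]; ring
        rw [hc1, hdelta i hf]; omega
    have hbound : ∀ i, 0 ≤ t i ∧ t i ≤ (Λ.deg lam i : ℝ) := by
      intro i
      have hδi : δ i ≤ Λ.deg lam i := hδ i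
      have hεδi : ε i ≤ δ i := hεδ i
      constructor
      · show (0:ℝ) ≤ (ε i : ℝ) + frac s i
        have := frac_nonneg' (hs0 i); positivity
      · show (ε i : ℝ) + frac s i ≤ (Λ.deg lam i : ℝ)
        rcases eq_or_lt_of_le (frac_nonneg' (hs0 i)) with hf | hf
        · rw [← hf]
          have : (ε i : ℝ) ≤ (Λ.deg lam i : ℝ) := by exact_mod_cast hεδi.trans hδi
          linarith
        · have h1 := hdelta i hf
          have h2 : ε i + 1 ≤ Λ.deg lam i := by omega
          have h3 : (ε i : ℝ) + 1 ≤ (Λ.deg lam i : ℝ) := by exact_mod_cast h2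
          have := frac_lt_one' (hs0 i)
          linarith
    refine ⟨t, hbound, Quot.sound ⟨?_, hfrt.symm⟩⟩
    rw [hflt', hcet]
    exact hseg

theorem isClosed_closedCell (hd : Λ.deg lam ≤ 1) :
    IsClosed {x : Λ.Real | ∃ (t : Fin k → ℝ) (h : ∀ i, 0 ≤ t i ∧ t i ≤ (Λ.deg lam i : ℝ)),
      x = Λ.pt lam t h} := by
  refine (isQuotientMap_mk Λ).isClosed_preimage.1 ?_
  have hpre : (Quotient.mk Λ.ptSetoid ⁻¹'
      {x : Λ.Real | ∃ (t : Fin k → ℝ) (h : ∀ i, 0 ≤ t i ∧ t i ≤ (Λ.deg lam i : ℝ)),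
        x = Λ.pt lam t h})
      = {p : Λ.Points | ∃ ε δ : Fin k → ℕ, ε ≤ δ ∧ δ ≤ Λ.deg lam ∧
          Λ.seg p.1 (fl p.2.1) (ce p.2.1) = Λ.seg lam ε δ} := by
    ext p
    show (∃ t h, Quotient.mk Λ.ptSetoid p = Λ.pt lam t h) ↔ _
    have hrw : Quotient.mk Λ.ptSetoid p = Λ.pt p.1 p.2.1 p.2.2 := rfl
    rw [hrw]
    exact pt_mem_closedCell_iff p.2.2 hd
  refine (congrArg IsClosed hpre).mpr ?_
  refine isClosed_sigma_iff.2 ?_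
  intro a
  have hfib : (Sigma.mk a ⁻¹' {p : Λ.Points | ∃ ε δ : Fin k → ℕ, ε ≤ δ ∧ δ ≤ Λ.deg lam ∧
          Λ.seg p.1 (fl p.2.1) (ce p.2.1) = Λ.seg lam ε δ}) =
      ⋃ mn ∈ {mn : (Fin k → ℕ) × (Fin k → ℕ) | mn.1 ≤ mn.2 ∧ mn.2 ≤ Λ.deg a ∧
          ∃ ε δ : Fin k → ℕ, ε ≤ δ ∧ δ ≤ Λ.deg lam ∧ Λ.seg a mn.1 mn.2 = Λ.seg lam ε δ},
        Subtype.val ⁻¹' Set.Icc (fun i => (mn.1 i : ℝ)) (fun i => (mn.2 i : ℝ)) := by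
    ext ⟨s, hsm⟩
    simp only [Set.mem_preimage, Set.mem_setOf_eq, Set.mem_iUnion, Set.mem_Icc]
    constructor
    · intro hP
      refine ⟨(fl s, ce s), ⟨fl_le_ce, ce_le_of_le fun i => (hsm i).2, hP⟩, ?_, ?_⟩
      · intro i
        show ((fl s i : ℕ) : ℝ) ≤ s i
        rw [show ((fl s i : ℕ) : ℝ) = ((⌊s i⌋.toNat : ℕ) : ℝ) from rfl,
          toNat_floor_cast (hsm i).1]
        exact Int.floor_le (s i)
      · intro i
        show s i ≤ ((ce s i : ℕ) : ℝ)
        have h1 : (0:ℤ) ≤ ⌈s i⌉ := Int.ceil_nonneg (hsm i).1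
        have h2 : ((⌈s i⌉.toNat : ℕ) : ℝ) = ((⌈s i⌉ : ℤ) : ℝ) := by
          exact_mod_cast congrArg (Int.cast : ℤ → ℝ) (Int.toNat_of_nonneg h1)
        rw [show ((ce s i : ℕ) : ℝ) = ((⌈s i⌉.toNat : ℕ) : ℝ) from rfl, h2]
        exact Int.le_ceil (s i)
    · rintro ⟨⟨m, n⟩, ⟨hmn, hna, ε, δ, hεδ, hδ, hseg⟩, hlo, hhi⟩
      have hmf : ∀ i, m i ≤ fl s i := by
        intro i
        have h1 : (m i : ℤ) ≤ ⌊s i⌋ := Int.le_floor.2 (by exact_mod_cast hlo i)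
        show m i ≤ (⌊s i⌋).toNat
        omega
      have hcn : ∀ i, ce s i ≤ n i := by
        intro i
        have h1 : ⌈s i⌉ ≤ (n i : ℤ) := Int.ceil_le.2 (by exact_mod_cast hhi i)
        show (⌈s i⌉).toNat ≤ n i
        omega
      have hflce : ∀ i, fl s i ≤ ce s i := fun i => fl_le_ce (s := s) i
      have hd1 : Λ.deg (Λ.seg a m n) = n - m := deg_seg hmn hna
      have hd2 : Λ.deg (Λ.seg lam ε δ) = δ - ε := deg_seg hεδ hδ
      have hnmδε : n - m = δ - ε := by rw [← hd1, hseg, hd2]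
      have hpq : fl s - m ≤ ce s - m := by
        intro i
        show (fl s - m) i ≤ (ce s - m) i
        simp only [Pi.sub_apply]
        have := hmf i; have := hflce i; omega
      have hq1 : ce s - m ≤ n - m := by
        intro i
        show (ce s - m) i ≤ (n - m) i
        simp only [Pi.sub_apply]
        have := hcn i; have := hmf i; omega
      have hq2 : ce s - m ≤ δ - ε := hnmδε ▸ hq1
      have e1 := seg_seg hmn hna hpq hq1
      have e2 := seg_seg hεδ hδ hpq hq2
      have hmp : m + (fl s - m) = fl s := by
        funext i
        simp only [Pi.add_apply, Pi.sub_apply]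
        have := hmf i; omega
      have hmq : m + (ce s - m) = ce s := by
        funext i
        simp only [Pi.add_apply, Pi.sub_apply]
        have := hmf i; have := hflce i; omega
      refine ⟨ε + (fl s - m), ε + (ce s - m), ?_, ?_, ?_⟩
      · intro i
        show (ε + (fl s - m)) i ≤ (ε + (ce s - m)) i
        have h4 : (fl s - m) i ≤ (ce s - m) i := hpq i
        simp only [Pi.add_apply, Pi.sub_apply] at h4 ⊢
        omega
      · intro i
        show (ε + (ce s - m)) i ≤ Λ.deg lam i
        have h1 : (ce s - m) i ≤ (δ - ε) i := hq2 i
        have h2 : ε i ≤ δ i := hεδ i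
        have h3 : δ i ≤ Λ.deg lam i := hδ i
        simp only [Pi.add_apply, Pi.sub_apply] at h1 ⊢
        omega
      · calc Λ.seg a (fl s) (ce s)
              = Λ.seg a (m + (fl s - m)) (m + (ce s - m)) := by rw [hmp, hmq]
          _ = Λ.seg (Λ.seg a m n) (fl s - m) (ce s - m) := e1.symm
          _ = Λ.seg (Λ.seg lam ε δ) (fl s - m) (ce s - m) := by rw [hseg]
          _ = Λ.seg lam (ε + (fl s - m)) (ε + (ce s - m)) := e2
  refine (congrArg IsClosed hfib).mpr ?_
  refine Set.Finite.isClosed_biUnion ?_ ?_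
  · refine Set.Finite.subset ((Set.finite_Iic (Λ.deg a)).prod (Set.finite_Iic (Λ.deg a))) ?_
    rintro ⟨m, n⟩ ⟨hmn, hna, -⟩
    exact ⟨hmn.trans hna, hna⟩
  · intro mn _
    refine IsClosed.preimage continuous_subtype_val ?_
    rw [← Set.pi_univ_Icc]
    exact isClosed_set_pi fun i _ => isClosed_Icc

theorem dense_cellDom (hd : Λ.deg lam ≤ 1) : Dense (cellDom Λ lam) := by
  intro tp
  rw [Metric.mem_closure_iff]
  intro ε hε
  set η := min (ε / 2) (1 / 3) with hη
  have hη0 : 0 < η := lt_min (by linarith) (by norm_num)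
  have hη3 : η ≤ 1 / 3 := min_le_right _ _
  have hηε : η < ε := lt_of_le_of_lt (min_le_left _ _) (by linarith)
  have ht01 : ∀ i, Λ.deg lam i = 1 → 0 ≤ tp.1 i ∧ tp.1 i ≤ 1 := by
    intro i hi
    have h2 := tp.2 i
    rw [hi] at h2
    exact_mod_cast h2
  refine ⟨⟨fun i => if Λ.deg lam i = 1 then min (max (tp.1 i) η) (1 - η) else tp.1 i,
    ?_⟩, ?_, ?_⟩
  · intro i
    by_cases hi : Λ.deg lam i = 1
    · have h01 := ht01 i hi
      simp only [if_pos hi, hi]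
      constructor
      · exact le_min (le_trans hη0.le (le_max_right _ _)) (by linarith)
      · push_cast
        exact le_trans (min_le_right _ _) (by linarith)
    · simp only [if_neg hi]
      exact tp.2 i
  · intro i hi
    have h01 := ht01 i hi
    simp only [if_pos hi]
    constructor
    · exact lt_min (lt_of_lt_of_le hη0 (le_max_right _ _)) (by linarith)
    · exact lt_of_le_of_lt (min_le_right _ _) (by linarith)
  · rw [Subtype.dist_eq, dist_pi_lt_iff hε]
    intro i
    show dist (tp.1 i) _ < ε
    by_cases hi : Λ.deg lam i = 1
    · have h01 := ht01 i hi
      simp only [if_pos hi]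
      rw [Real.dist_eq, abs_sub_lt_iff]
      constructor
      · have hge : tp.1 i - η ≤ min (max (tp.1 i) η) (1 - η) :=
          le_min (by linarith [le_max_left (tp.1 i) η]) (by linarith)
        linarith
      · have hle : min (max (tp.1 i) η) (1 - η) ≤ tp.1 i + η :=
          le_trans (min_le_left _ _) (max_le (by linarith) (by linarith))
        linarith
    · simp only [if_neg hi]
      rw [Real.dist_eq, sub_self, abs_zero]
      exact hε

theorem range_charMap (hd : Λ.deg lam ≤ 1) :
    Set.range (charMap Λ lam) = closure (Λ.Qcube lam) := by
  have himg : charMap Λ lam '' (cellDom Λ lam) = Λ.Qcube lam := by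
    ext x
    constructor
    · rintro ⟨tp, htp, rfl⟩
      exact ⟨tp.1, tp.2, htp, rfl⟩
    · rintro ⟨t, h, hc, rfl⟩
      exact ⟨⟨t, h⟩, hc, rfl⟩
  apply Set.Subset.antisymm
  · rw [← Set.image_univ, ← (dense_cellDom hd).closure_eq]
    exact (image_closure_subset_closure_image (charMap Λ lam).continuous).trans
      (by rw [himg])
  · refine closure_minimal ?_ ?_
    · rw [← himg]
      exact Set.image_subset_range _ _
    · have hr : Set.range (charMap Λ lam) = {x : Λ.Real | ∃ (t : Fin k → ℝ)
          (h : ∀ i, 0 ≤ t i ∧ t i ≤ (Λ.deg lam i : ℝ)), x = Λ.pt lam t h} := by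
        ext x
        constructor
        · rintro ⟨tp, rfl⟩
          exact ⟨tp.1, tp.2, rfl⟩
        · rintro ⟨t, h, rfl⟩
          exact ⟨⟨t, h⟩, rfl⟩
      rw [hr]
      exact isClosed_closedCell hd

theorem boundary_charMap (hd : Λ.deg lam ≤ 1) :
    charMap Λ lam '' { tp | ¬ ∀ i, Λ.deg lam i = 1 → 0 < tp.1 i ∧ tp.1 i < 1 }
      ⊆ Λ.skel (∑ i, Λ.deg lam i - 1) := by
  rintro x ⟨tp, htp, rfl⟩
  push_neg at htp
  obtain ⟨i0, hi0, hbad⟩ := htp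
  have hmem : Λ.pt lam tp.1 tp.2 ∈ Λ.Qcube (Λ.seg lam (fl tp.1) (ce tp.1)) :=
    pt_mem_Qcube_seg tp.2
  have hdmu := deg_seg_flce tp.2
  have hdmu1 := deg_seg_flce_le_one tp.2
  refine Qcube_subset_skel hdmu1 ?_ hmem
  have hint : frac tp.1 i0 = 0 := by
    have hb := tp.2 i0
    rw [hi0] at hb
    rcases eq_or_lt_of_le hb.1 with h0 | h0
    · rw [frac_eq_fract hb.1, ← h0]
      simp
    · have h1 : tp.1 i0 = 1 := le_antisymm (by exact_mod_cast hb.2) (hbad h0)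
      rw [frac_eq_fract hb.1, h1]
      simp [Int.fract]
  have hlt : ∑ i, Λ.deg (Λ.seg lam (fl tp.1) (ce tp.1)) i < ∑ i, Λ.deg lam i := by
    apply Finset.sum_lt_sum
    · intro j _
      have h1 : ce tp.1 j ≤ Λ.deg lam j := ce_le_of_le (fun i => (tp.2 i).2) j
      have h2 := congrFun hdmu j
      simp only [Pi.sub_apply] at h2
      omega
    · refine ⟨i0, Finset.mem_univ i0, ?_⟩
      have h1 := ce_eq_fl_of_frac_eq_zero (tp.2 i0).1 hint
      have h2 := congrFun hdmu i0
      simp only [Pi.sub_apply] at h2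
      omega
  omega

end KGraph

open KGraph in
/-- A CW-structure on the topological realization `X_Λ` of a `k`-graph, with
`r`-skeleton `X_Λ^r` and one cell `Q_λ` of dimension `|d(λ)|` for each `λ` with
`d(λ) ≤ 1_k`: the cells are disjoint and cover `X_Λ`; each open cell `Q_λ` is
homeomorphic to an open cube of dimension `|d(λ)|`; each cell admits a
characteristic map `F` defined on the closed cube `[0, d(λ)]`, which restricts
to a homeomorphism of the open cube onto `Q_λ`, has image the closed cell
`closure Q_λ`, and maps the boundary of the cube into the skeleton of dimension
`|d(λ)| - 1`; the whole space is the `k`-skeleton; and `X_Λ` carries the weak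
topology determined by the skeleta. -/
structure RealizationIsCWComplex {k : ℕ} (Λ : KGraph k) : Prop where
  /-- The `k`-skeleton is everything: `X_Λ` is a `k`-dimensional CW-complex. -/
  skel_top : Λ.skel k = Set.univ
  /-- The open cells cover `X_Λ`. -/
  cells_cover : (⋃ lam ∈ { lam : Λ.Mor | Λ.deg lam ≤ 1 }, Λ.Qcube lam) = Set.univ
  /-- The open cells are pairwise disjoint. -/
  cells_disjoint : { lam : Λ.Mor | Λ.deg lam ≤ 1 }.PairwiseDisjoint Λ.Qcube
  /-- Each open cell `Q_λ` has dimension `|d(λ)|`. -/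
  cell_dim : ∀ lam : Λ.Mor, Λ.deg lam ≤ 1 →
    Nonempty (↥(Λ.Qcube lam) ≃ₜ
      ↥{ t : Fin (∑ i, Λ.deg lam i) → ℝ | ∀ i, 0 < t i ∧ t i < 1 })
  /-- Characteristic maps: for each cell a continuous map on the closed cube
  `[0, d(λ)]`, given by `t ↦ [λ, t]`, restricting to a homeomorphism of the
  open cube onto the open cell, with image the closed cell and mapping the
  boundary of the cube into the `(|d(λ)| - 1)`-skeleton. -/
  char_maps : ∀ lam : Λ.Mor, Λ.deg lam ≤ 1 →
    ∃ F : C(↥{ t : Fin k → ℝ | ∀ i, 0 ≤ t i ∧ t i ≤ (Λ.deg lam i : ℝ) }, Λ.Real),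
      (∀ tp, F tp = Λ.pt lam tp.1 tp.2) ∧
      Set.range F = closure (Λ.Qcube lam) ∧
      (∃ G : ↥{ tp : ↥{ t : Fin k → ℝ | ∀ i, 0 ≤ t i ∧ t i ≤ (Λ.deg lam i : ℝ) } |
            ∀ i, Λ.deg lam i = 1 → 0 < tp.1 i ∧ tp.1 i < 1 } ≃ₜ ↥(Λ.Qcube lam),
        ∀ tp, (G tp).1 = F tp.1) ∧
      (F '' { tp | ¬ ∀ i, Λ.deg lam i = 1 → 0 < tp.1 i ∧ tp.1 i < 1 }
        ⊆ Λ.skel (∑ i, Λ.deg lam i - 1))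
  /-- `X_Λ` carries the weak topology determined by the skeleta. -/
  weak_topology : ∀ U : Set Λ.Real, IsOpen U ↔
    ∀ r ≤ k, IsOpen (Subtype.val ⁻¹' U : Set ↥(Λ.skel r))

open KGraph in
/-- The topological realization `X_Λ` of a `k`-graph is a
`k`-dimensional CW-complex with `r`-skeleton `X_Λ^r` for `r ≤ k`, whose open
cells are the `Q_λ` for `d(λ) ≤ 1_k` (of dimension `|d(λ)|`) and whose closed
cells are their closures. -/
theorem realization_is_CW_complex (k : ℕ) (Λ : KGraph k) :
    RealizationIsCWComplex Λ := by
  have cells_cover : (⋃ lam ∈ { lam : Λ.Mor | Λ.deg lam ≤ 1 }, Λ.Qcube lam) = Set.univ := by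
    apply Set.eq_univ_of_forall
    intro x
    obtain ⟨p, rfl⟩ := Quot.exists_rep x
    refine Set.mem_iUnion₂.2 ?_
    exact ⟨_, deg_seg_flce_le_one p.2.2, pt_mem_Qcube_seg p.2.2⟩
  have skel_top : Λ.skel k = Set.univ := by
    refine Set.Subset.antisymm (Set.subset_univ _) ?_
    rw [← cells_cover]
    refine Set.iUnion₂_subset fun lam hlam => ?_
    refine Qcube_subset_skel hlam ?_
    calc ∑ i, Λ.deg lam i ≤ ∑ _i : Fin k, 1 := Finset.sum_le_sum fun i _ => by
          have h1 : Λ.deg lam i ≤ (1 : Fin k → ℕ) i := hlam i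
          simpa using h1
      _ = k := by simp
  refine ⟨skel_top, cells_cover, ?_, ?_, ?_, ?_⟩
  · -- cells_disjoint
    intro lam hlam lam' hlam' hne
    refine Set.disjoint_left.2 fun x hx hx' => ?_
    obtain ⟨t, h, hc, rfl⟩ := hx
    obtain ⟨t', h', hc', heq⟩ := hx'
    exact hne (pt_canonical_inj hlam hlam' hc hc' heq).1
  · -- cell_dim
    intro lam hd
    exact ⟨(cellHomeo hd).symm.trans (reindexHomeo hd)⟩
  · -- char_maps
    intro lam hd
    refine ⟨charMap Λ lam, fun tp => rfl, range_charMap hd, ⟨cellHomeo hd, fun tp => rfl⟩,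
      boundary_charMap hd⟩
  · -- weak_topology
    intro U
    constructor
    · intro hU r _
      exact hU.preimage continuous_subtype_val
    · intro h
      have hs : IsOpen (Λ.skel k) := by rw [skel_top]; exact isOpen_univ
      have himg := hs.isOpenMap_subtype_val _ (h k le_rfl)
      rwa [Subtype.image_preimage_coe, skel_top, Set.univ_inter] at himg
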